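/- arXiv:2410.02738 — 2 statements merged into one kernel-verified Lean document; each statement's English description precedes it below -/
import Mathlib

section
/- For every complex number q with |q| < 1, the following identity holds: Σ_{n≥0} (q; q)_{2n} q^{4n} / (q^4; q^4)_n = q/(1+q^3) + ((q; q)_∞/(q^4; q^4)_∞) · Σ_{m≥0} (−q^2; q^2)_m q^{2m} / (q; q^2)_m. -/
/-- The finite q-Pochhammer symbol `(a; q)_n = ∏_{j=0}^{n-1} (1 - a q^j)`. -/
noncomputable def qPoch (a q : ℂ) (n : ℕ) : ℂ := ∏ j ∈ Finset.range n, (1 - a * q ^ j)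

/-- The infinite q-Pochhammer symbol `(a; q)_∞ = ∏_{j=0}^{∞} (1 - a q^j)`. -/
noncomputable def qPochInf (a q : ℂ) : ℂ := ∏' j : ℕ, (1 - a * q ^ j)

open Filter Finset Complex Topology

noncomputable def auxA (q : ℂ) (n : ℕ) : ℂ := ∏ j ∈ Finset.range n, (1 - q ^ (2 * j + 1))
noncomputable def auxB (q : ℂ) (n : ℕ) : ℂ := ∏ j ∈ Finset.range n, (1 - q ^ (2 * j + 2))
noncomputable def auxC (q : ℂ) (n : ℕ) : ℂ := ∏ j ∈ Finset.range n, (1 + q ^ (2 * j + 2))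

lemma auxA_zero (q : ℂ) : auxA q 0 = 1 := by simp [auxA]
lemma auxC_zero (q : ℂ) : auxC q 0 = 1 := by simp [auxC]
lemma auxA_succ (q : ℂ) (n : ℕ) : auxA q (n + 1) = auxA q n * (1 - q ^ (2 * n + 1)) :=
  Finset.prod_range_succ _ n
lemma auxB_succ (q : ℂ) (n : ℕ) : auxB q (n + 1) = auxB q n * (1 - q ^ (2 * n + 2)) :=
  Finset.prod_range_succ _ n
lemma auxC_succ (q : ℂ) (n : ℕ) : auxC q (n + 1) = auxC q n * (1 + q ^ (2 * n + 2)) :=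
  Finset.prod_range_succ _ n

lemma qPoch_succ (a q : ℂ) (n : ℕ) : qPoch a q (n + 1) = qPoch a q n * (1 - a * q ^ n) :=
  Finset.prod_range_succ _ n


noncomputable def auxS (q P : ℂ) (m : ℕ) : ℂ :=
  ((1 - q) * P + ((q ^ 4) ^ m + q * (q ^ 2) ^ m + q - 1) * (auxA q m / auxC q m)) / (1 + q ^ 3)

noncomputable def auxY (q K : ℂ) (m : ℕ) : ℂ :=
  (K + ((q ^ 2) ^ m - q) * (auxC q m / auxA q m)) / (1 + q ^ 3)

/-- A sequence `1 - g j` with `∑ ‖g j‖ < ∞` and nonvanishing terms is multipliable with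
nonvanishing product. -/
lemma aux_master {g : ℕ → ℂ} (hs : Summable fun j => ‖g j‖) (hnz : ∀ j, 1 - g j ≠ 0) :
    Multipliable (fun j => 1 - g j) ∧ (∏' j, (1 - g j)) ≠ 0 := by
  have hlog : Summable fun j => Complex.log (1 - g j) := by
    have hev : ∀ᶠ j in Filter.cofinite, ‖Complex.log (1 - g j)‖ ≤ (3/2) * ‖g j‖ := by
      rw [Nat.cofinite_eq_atTop]
      filter_upwards [hs.tendsto_atTop_zero.eventually_le_const
        (by norm_num : (0:ℝ) < 1/2)] with j hj
      have h1 : ‖-g j‖ ≤ 1/2 := by rwa [norm_neg]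
      have := Complex.norm_log_one_add_half_le_self h1
      rw [norm_neg] at this
      simpa [sub_eq_add_neg] using this
    exact Summable.of_norm_bounded_eventually (hs.mul_left (3/2)) hev
  constructor
  · exact Complex.multipliable_of_summable_log hlog
  · have := Complex.cexp_tsum_eq_tprod (f := fun j => 1 - g j) hnz hlog
    rw [← this]
    exact Complex.exp_ne_zero _

lemma aux_norm_pow_lt {q : ℂ} (hq : ‖q‖ < 1) {k : ℕ} (hk : k ≠ 0) : ‖q ^ k‖ < 1 := by
  rw [norm_pow]; exact pow_lt_one₀ (norm_nonneg q) hq hk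

lemma aux_one_sub_ne {z : ℂ} (hz : ‖z‖ < 1) : 1 - z ≠ 0 := by
  intro h
  have : z = 1 := by linear_combination -h
  rw [this] at hz; norm_num at hz

lemma aux_one_add_ne {z : ℂ} (hz : ‖z‖ < 1) : 1 + z ≠ 0 := by
  have := aux_one_sub_ne (z := -z) (by rwa [norm_neg])
  simpa [sub_neg_eq_add] using this

/-- Telescoping sums: if `S n - S (n+1) = t n`, `t` is summable and `S → 0`, then
`∑' t = S 0`. -/
lemma aux_tsum_telescope {t S : ℕ → ℂ} (ht : Summable t)
    (hstep : ∀ n, S n - S (n + 1) = t n) (hlim : Tendsto S atTop (𝓝 0)) :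
    ∑' n, t n = S 0 := by
  have hpartial : ∀ M, ∑ n ∈ range M, t n = S 0 - S M := by
    intro M
    induction M with
    | zero => simp
    | succ M ih => rw [Finset.sum_range_succ, ih, ← hstep M]; ring
  have h1 : Tendsto (fun M => ∑ n ∈ range M, t n) atTop (𝓝 (S 0)) := by
    simp only [hpartial]
    simpa using tendsto_const_nhds.sub hlim
  exact tendsto_nhds_unique ht.hasSum.tendsto_sum_nat h1

/-- Summability from a geometric bound times a convergent sequence. -/
lemma aux_summable {t x : ℕ → ℂ} {L : ℂ} (hx : Tendsto x atTop (𝓝 L)) {r : ℝ}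
    (hr0 : 0 ≤ r) (hr1 : r < 1) (hbound : ∀ n, ‖t n‖ ≤ r ^ n * ‖x n‖) : Summable t := by
  have hev : ∀ᶠ n in atTop, ‖x n‖ ≤ ‖L‖ + 1 :=
    (hx.norm).eventually_le_const (by linarith [norm_nonneg L])
  refine Summable.of_norm_bounded_eventually (g := fun n => (‖L‖ + 1) * r ^ n)
    ((summable_geometric_of_lt_one hr0 hr1).mul_left _) ?_
  rw [Nat.cofinite_eq_atTop]
  filter_upwards [hev] with n hn
  calc ‖t n‖ ≤ r ^ n * ‖x n‖ := hbound n
    _ ≤ r ^ n * (‖L‖ + 1) := mul_le_mul_of_nonneg_left hn (pow_nonneg hr0 n)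
    _ = (‖L‖ + 1) * r ^ n := by ring


set_option maxHeartbeats 1000000 in
lemma aux_stepA (q P a c : ℂ) (n : ℕ) (h3 : 1 + q ^ 3 ≠ 0) (hc : c ≠ 0)
    (hc1 : 1 + q ^ (2 * n + 2) ≠ 0) :
    ((1 - q) * P + ((q ^ 4) ^ n + q * (q ^ 2) ^ n + q - 1) * (a / c)) / (1 + q ^ 3) -
      ((1 - q) * P + ((q ^ 4) ^ (n + 1) + q * (q ^ 2) ^ (n + 1) + q - 1) *
        (a * (1 - q ^ (2 * n + 1)) / (c * (1 + q ^ (2 * n + 2))))) / (1 + q ^ 3) =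
      (q ^ 4) ^ n * (a / c) := by
  field_simp
  ring

set_option maxHeartbeats 1000000 in
lemma aux_stepB (q K a c : ℂ) (n : ℕ) (h3 : 1 + q ^ 3 ≠ 0) (ha : a ≠ 0)
    (hc1 : 1 - q ^ (2 * n + 1) ≠ 0) :
    (K + ((q ^ 2) ^ n - q) * (c / a)) / (1 + q ^ 3) -
      (K + ((q ^ 2) ^ (n + 1) - q) *
        (c * (1 + q ^ (2 * n + 2)) / (a * (1 - q ^ (2 * n + 1))))) / (1 + q ^ 3) =
      (q ^ 2) ^ n * (c / a) := by
  field_simp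
  ring

set_option maxHeartbeats 1000000 in
theorem stmt_15 (q : ℂ) (hq : ‖q‖ < 1) :
    ∑' n : ℕ, qPoch q q (2 * n) * q ^ (4 * n) / qPoch (q ^ 4) (q ^ 4) n =
      q / (1 + q ^ 3) + (qPochInf q q / qPochInf (q ^ 4) (q ^ 4)) *
        ∑' m : ℕ, qPoch (-q ^ 2) (q ^ 2) m * q ^ (2 * m) / qPoch q (q ^ 2) m := by
  -- basic nonvanishing facts
  have hsub : ∀ k : ℕ, k ≠ 0 → (1 : ℂ) - q ^ k ≠ 0 := fun k hk =>
    aux_one_sub_ne (aux_norm_pow_lt hq hk)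
  have hadd : ∀ k : ℕ, k ≠ 0 → (1 : ℂ) + q ^ k ≠ 0 := fun k hk =>
    aux_one_add_ne (aux_norm_pow_lt hq hk)
  have h3 : (1 : ℂ) + q ^ 3 ≠ 0 := hadd 3 (by norm_num)
  have hA : ∀ n, auxA q n ≠ 0 := fun n =>
    Finset.prod_ne_zero_iff.2 fun j _ => hsub _ (by omega)
  have hB : ∀ n, auxB q n ≠ 0 := fun n =>
    Finset.prod_ne_zero_iff.2 fun j _ => hsub _ (by omega)
  have hC : ∀ n, auxC q n ≠ 0 := fun n =>
    Finset.prod_ne_zero_iff.2 fun j _ => hadd _ (by omega)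
  -- qPoch identities
  have hP2 : ∀ n, qPoch q q (2 * n) = auxA q n * auxB q n := by
    intro n
    induction n with
    | zero => simp [qPoch, auxA, auxB]
    | succ n ih =>
      have h2 : 2 * (n + 1) = (2 * n + 1) + 1 := by ring
      rw [h2, qPoch_succ, qPoch_succ, ih, auxA_succ, auxB_succ]
      ring
  have hP4 : ∀ n, qPoch (q ^ 4) (q ^ 4) n = auxB q n * auxC q n := by
    intro n
    rw [qPoch, auxB, auxC, ← Finset.prod_mul_distrib]
    exact Finset.prod_congr rfl fun j _ => by ring
  have hPC : ∀ m, qPoch (-q ^ 2) (q ^ 2) m = auxC q m := by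
    intro m
    rw [qPoch, auxC]
    exact Finset.prod_congr rfl fun j _ => by ring
  have hPA : ∀ m, qPoch q (q ^ 2) m = auxA q m := by
    intro m
    rw [qPoch, auxA]
    exact Finset.prod_congr rfl fun j _ => by ring
  -- infinite products
  have hgeom : Summable fun j : ℕ => ‖q‖ ^ j := summable_geometric_of_lt_one (norm_nonneg q) hq
  obtain ⟨hm1, hQ1ne⟩ : Multipliable (fun j : ℕ => 1 - q * q ^ j) ∧
      (∏' j : ℕ, (1 - q * q ^ j)) ≠ 0 := by
    apply aux_master
    · have he : (fun j : ℕ => ‖q * q ^ j‖) = fun j => ‖q‖ * ‖q‖ ^ j := by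
        funext j; rw [norm_mul, norm_pow]
      rw [he]
      exact hgeom.mul_left ‖q‖
    · intro j
      have : q * q ^ j = q ^ (j + 1) := by ring
      rw [this]
      exact hsub _ (by omega)
  have hq4lt : ‖q ^ 4‖ < 1 := aux_norm_pow_lt hq (by norm_num)
  have hq2lt : ‖q ^ 2‖ < 1 := aux_norm_pow_lt hq (by norm_num)
  obtain ⟨hm4, hQ4ne⟩ : Multipliable (fun j : ℕ => 1 - q ^ 4 * (q ^ 4) ^ j) ∧
      (∏' j : ℕ, (1 - q ^ 4 * (q ^ 4) ^ j)) ≠ 0 := by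
    apply aux_master
    · have he : (fun j : ℕ => ‖q ^ 4 * (q ^ 4) ^ j‖) = fun j => ‖q ^ 4‖ * ‖q ^ 4‖ ^ j := by
        funext j; rw [norm_mul, norm_pow, norm_pow, norm_pow]
      rw [he]
      exact (summable_geometric_of_lt_one (norm_nonneg _) hq4lt).mul_left _
    · intro j
      have : q ^ 4 * (q ^ 4) ^ j = q ^ (4 * j + 4) := by ring
      rw [this]
      exact hsub _ (by omega)
  have hQ1eq : qPochInf q q = ∏' j : ℕ, (1 - q * q ^ j) := rfl
  have hQ4eq : qPochInf (q ^ 4) (q ^ 4) = ∏' j : ℕ, (1 - q ^ 4 * (q ^ 4) ^ j) := rfl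
  have hQ1 : qPochInf q q ≠ 0 := by rw [hQ1eq]; exact hQ1ne
  have hQ4 : qPochInf (q ^ 4) (q ^ 4) ≠ 0 := by rw [hQ4eq]; exact hQ4ne
  -- limits of partial products
  have htend1 : Tendsto (fun n => qPoch q q n) atTop (𝓝 (qPochInf q q)) := by
    rw [hQ1eq]
    exact hm1.hasProd.tendsto_prod_nat
  have htend4 : Tendsto (fun n => qPoch (q ^ 4) (q ^ 4) n) atTop (𝓝 (qPochInf (q ^ 4) (q ^ 4))) := by
    rw [hQ4eq]
    exact hm4.hasProd.tendsto_prod_nat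
  have htwo : Tendsto (fun n : ℕ => 2 * n) atTop atTop :=
    tendsto_atTop_mono (fun n : ℕ => Nat.le_mul_of_pos_left n (by norm_num)) tendsto_id
  have htend2 : Tendsto (fun n => qPoch q q (2 * n)) atTop (𝓝 (qPochInf q q)) := htend1.comp htwo
  -- the limit of the ratio sequences
  set P : ℂ := qPochInf q q / qPochInf (q ^ 4) (q ^ 4) with hP_def
  have hPne : P ≠ 0 := div_ne_zero hQ1 hQ4
  have hACeq : (fun n => auxA q n / auxC q n) =
      fun n => qPoch q q (2 * n) / qPoch (q ^ 4) (q ^ 4) n := by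
    funext n
    rw [hP2 n, hP4 n, div_eq_div_iff (hC n) (mul_ne_zero (hB n) (hC n))]
    ring
  have hCAeq : (fun n => auxC q n / auxA q n) =
      fun n => qPoch (q ^ 4) (q ^ 4) n / qPoch q q (2 * n) := by
    funext n
    rw [hP2 n, hP4 n, div_eq_div_iff (hA n) (mul_ne_zero (hA n) (hB n))]
    ring
  have hAC : Tendsto (fun n => auxA q n / auxC q n) atTop (𝓝 P) := by
    rw [hACeq, hP_def]
    exact htend2.div htend4 hQ4
  have hCA : Tendsto (fun n => auxC q n / auxA q n) atTop
      (𝓝 (qPochInf (q ^ 4) (q ^ 4) / qPochInf q q)) := by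
    rw [hCAeq]
    exact htend4.div htend2 hQ1
  ---- Side A: the left-hand sum telescopes
  have hstepA : ∀ n, auxS q P n - auxS q P (n + 1) = (q ^ 4) ^ n * (auxA q n / auxC q n) := by
    intro n
    simp only [auxS]
    rw [auxA_succ, auxC_succ]
    exact aux_stepA q P (auxA q n) (auxC q n) n h3 (hC n) (hadd _ (by omega))
  have hlimA : Tendsto (auxS q P) atTop (𝓝 0) := by
    have l4 : Tendsto (fun m : ℕ => (q ^ 4 : ℂ) ^ m) atTop (𝓝 0) :=
      tendsto_pow_atTop_nhds_zero_of_norm_lt_one hq4lt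
    have l2 : Tendsto (fun m : ℕ => (q ^ 2 : ℂ) ^ m) atTop (𝓝 0) :=
      tendsto_pow_atTop_nhds_zero_of_norm_lt_one hq2lt
    have e2 : Tendsto (fun m : ℕ => q * (q ^ 2 : ℂ) ^ m) atTop (𝓝 (q * 0)) :=
      l2.const_mul q
    have e4 : Tendsto (fun m : ℕ => (q ^ 4 : ℂ) ^ m + q * (q ^ 2) ^ m + q - 1) atTop
        (𝓝 (0 + q * 0 + q - 1)) := ((l4.add e2).add_const q).sub_const 1
    have e5 : Tendsto (fun m : ℕ => ((q ^ 4 : ℂ) ^ m + q * (q ^ 2) ^ m + q - 1) *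
        (auxA q m / auxC q m)) atTop (𝓝 ((0 + q * 0 + q - 1) * P)) := e4.mul hAC
    have e6 : Tendsto (fun m : ℕ => (1 - q) * P + ((q ^ 4 : ℂ) ^ m + q * (q ^ 2) ^ m + q - 1) *
        (auxA q m / auxC q m)) atTop (𝓝 ((1 - q) * P + (0 + q * 0 + q - 1) * P)) :=
      e5.const_add ((1 - q) * P)
    have e7 := e6.div_const (1 + q ^ 3)
    have hval : ((1 - q) * P + (0 + q * 0 + q - 1) * P) / (1 + q ^ 3) = 0 := by ring
    rw [hval] at e7
    exact e7
  have hsummA : Summable (fun n => (q ^ 4 : ℂ) ^ n * (auxA q n / auxC q n)) := by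
    apply aux_summable hAC (r := ‖q ^ 4‖) (norm_nonneg _) hq4lt
    intro n
    rw [norm_mul, norm_pow]
  have htsumA : ∑' n, (q ^ 4 : ℂ) ^ n * (auxA q n / auxC q n) = auxS q P 0 :=
    aux_tsum_telescope hsummA hstepA hlimA
  ---- Side B: the right-hand sum telescopes
  have hstepB : ∀ n, auxY q (q / P) n - auxY q (q / P) (n + 1) =
      (q ^ 2) ^ n * (auxC q n / auxA q n) := by
    intro n
    simp only [auxY]
    rw [auxA_succ, auxC_succ]
    exact aux_stepB q (q / P) (auxA q n) (auxC q n) n h3 (hA n) (hsub _ (by omega))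
  have hlimB : Tendsto (auxY q (q / P)) atTop (𝓝 0) := by
    have l2 : Tendsto (fun m : ℕ => (q ^ 2 : ℂ) ^ m) atTop (𝓝 0) :=
      tendsto_pow_atTop_nhds_zero_of_norm_lt_one hq2lt
    have e4 : Tendsto (fun m : ℕ => (q ^ 2 : ℂ) ^ m - q) atTop (𝓝 (0 - q)) := l2.sub_const q
    have e5 : Tendsto (fun m : ℕ => ((q ^ 2 : ℂ) ^ m - q) * (auxC q m / auxA q m)) atTop
        (𝓝 ((0 - q) * (qPochInf (q ^ 4) (q ^ 4) / qPochInf q q))) := e4.mul hCA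
    have e6 := (e5.const_add (q / P)).div_const (1 + q ^ 3)
    have hval : (q / P + (0 - q) * (qPochInf (q ^ 4) (q ^ 4) / qPochInf q q)) / (1 + q ^ 3)
        = 0 := by
      rw [hP_def]
      field_simp
      ring
    rw [hval] at e6
    exact e6
  have hsummB : Summable (fun n => (q ^ 2 : ℂ) ^ n * (auxC q n / auxA q n)) := by
    apply aux_summable hCA (r := ‖q ^ 2‖) (norm_nonneg _) hq2lt
    intro n
    rw [norm_mul, norm_pow]
  have htsumB : ∑' n, (q ^ 2 : ℂ) ^ n * (auxC q n / auxA q n) = auxY q (q / P) 0 :=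
    aux_tsum_telescope hsummB hstepB hlimB
  ---- rewrite both sides of the goal
  have hlhs : ∀ n : ℕ, qPoch q q (2 * n) * q ^ (4 * n) / qPoch (q ^ 4) (q ^ 4) n =
      (q ^ 4 : ℂ) ^ n * (auxA q n / auxC q n) := by
    intro n
    rw [hP2 n, hP4 n, pow_mul, ← mul_div_assoc,
      div_eq_div_iff (mul_ne_zero (hB n) (hC n)) (hC n)]
    ring
  have hrhs : ∀ m : ℕ, qPoch (-q ^ 2) (q ^ 2) m * q ^ (2 * m) / qPoch q (q ^ 2) m =
      (q ^ 2 : ℂ) ^ m * (auxC q m / auxA q m) := by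
    intro m
    rw [hPC m, hPA m, pow_mul, mul_comm (auxC q m) ((q ^ 2) ^ m), mul_div_assoc]
  calc ∑' n : ℕ, qPoch q q (2 * n) * q ^ (4 * n) / qPoch (q ^ 4) (q ^ 4) n
      = ∑' n : ℕ, (q ^ 4 : ℂ) ^ n * (auxA q n / auxC q n) := tsum_congr hlhs
    _ = auxS q P 0 := htsumA
    _ = q / (1 + q ^ 3) + P * auxY q (q / P) 0 := by
        simp only [auxS, auxY, pow_zero, auxA_zero, auxC_zero]
        field_simp
        ring
    _ = q / (1 + q ^ 3) + P * ∑' m : ℕ, (q ^ 2 : ℂ) ^ m * (auxC q m / auxA q m) := by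
        rw [htsumB]
    _ = q / (1 + q ^ 3) + (qPochInf q q / qPochInf (q ^ 4) (q ^ 4)) *
          ∑' m : ℕ, qPoch (-q ^ 2) (q ^ 2) m * q ^ (2 * m) / qPoch q (q ^ 2) m := by
        rw [hP_def, tsum_congr hrhs]
end

section
/- For every complex number q with |q| < 1, (q^4; q^4)_∞ · Σ_{n≥0} (q; q)_{2n} q^{2n} / (q^4; q^4)_n = (q^4; q^4)_∞ · Σ_{n≥0} q^{2n} (q; q^2)_n / (−q^2; q^2)_n, and this common value equals 2(q^4; q^4)_∞/(1+q) − (q; q)_∞/(1+q). -/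
open Complex Filter Finset

lemma factor_ne_zero {a q : ℂ} (ha : ‖a‖ < 1) (hq : ‖q‖ ≤ 1) (j : ℕ) :
    1 - a * q ^ j ≠ 0 := by
  intro h
  have h1 : a * q ^ j = 1 := by linear_combination -h
  have : ‖a * q ^ j‖ < 1 := by
    rw [norm_mul, norm_pow]
    calc ‖a‖ * ‖q‖ ^ j ≤ ‖a‖ * 1 :=
          mul_le_mul_of_nonneg_left (pow_le_one₀ (norm_nonneg _) hq) (norm_nonneg _)
      _ = ‖a‖ := mul_one _
      _ < 1 := ha
  rw [h1] at this
  simp at this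

lemma summable_log {a q : ℂ} (ha : ‖a‖ < 1) (hq : ‖q‖ < 1) :
    Summable (fun j : ℕ => Complex.log (1 - a * q ^ j)) := by
  have hgeo : Summable (fun j : ℕ => (3/2 : ℝ) * (‖a‖ * ‖q‖ ^ j)) :=
    ((summable_geometric_of_lt_one (norm_nonneg _) hq).mul_left _).mul_left _
  apply hgeo.of_norm_bounded_eventually_nat
  have h0 : Tendsto (fun j : ℕ => ‖a‖ * ‖q‖ ^ j) atTop (nhds 0) := by
    simpa using (tendsto_pow_atTop_nhds_zero_of_lt_one (norm_nonneg _) hq).const_mul (‖a‖)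
  filter_upwards [h0.eventually_le_const (by norm_num : (0:ℝ) < 1/2)] with j hj
  have hz : ‖(-(a * q ^ j))‖ ≤ 1/2 := by
    simpa using hj
  have := Complex.norm_log_one_add_half_le_self hz
  simp only [norm_neg] at this ⊢
  calc ‖Complex.log (1 - a * q ^ j)‖ = ‖Complex.log (1 + -(a * q ^ j))‖ := by ring_nf
    _ ≤ 3/2 * ‖a * q ^ j‖ := by simpa using this
    _ = 3/2 * (‖a‖ * ‖q‖ ^ j) := by
        rw [norm_mul, norm_pow]

lemma hasProd_qPoch {a q : ℂ} (ha : ‖a‖ < 1) (hq : ‖q‖ < 1) :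
    HasProd (fun j : ℕ => 1 - a * q ^ j) (qPochInf a q) :=
  by
    have h2 := Complex.cexp_tsum_eq_tprod (f := fun j : ℕ => 1 - a * q ^ j)
      (fun j => factor_ne_zero ha hq.le j) (summable_log ha hq)
    rw [qPochInf, ← h2]
    exact Complex.hasProd_of_hasSum_log (fun j => factor_ne_zero ha hq.le j) (summable_log ha hq).hasSum

lemma tendsto_qPoch {a q : ℂ} (ha : ‖a‖ < 1) (hq : ‖q‖ < 1) :
    Tendsto (fun n => qPoch a q n) atTop (nhds (qPochInf a q)) :=
  (hasProd_qPoch ha hq).tendsto_prod_nat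

lemma qPochInf_ne_zero {a q : ℂ} (ha : ‖a‖ < 1) (hq : ‖q‖ < 1) :
    qPochInf a q ≠ 0 := by
  have h2 := Complex.cexp_tsum_eq_tprod (f := fun j : ℕ => 1 - a * q ^ j)
    (fun j => factor_ne_zero ha hq.le j) (summable_log ha hq)
  rw [qPochInf, ← h2]
  exact Complex.exp_ne_zero _

lemma split_even_odd (q : ℂ) (n : ℕ) :
    qPoch q q (2 * n) = qPoch q (q ^ 2) n * qPoch (q ^ 2) (q ^ 2) n := by
  induction n with
  | zero => simp [qPoch]
  | succ n ih =>
    have h2 : 2 * (n + 1) = (2 * n) + 1 + 1 := by ring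
    rw [h2]
    simp only [qPoch, Finset.prod_range_succ] at *
    rw [ih]
    ring

lemma split_sq (q : ℂ) (n : ℕ) :
    qPoch (q ^ 4) (q ^ 4) n = qPoch (q ^ 2) (q ^ 2) n * qPoch (-q ^ 2) (q ^ 2) n := by
  rw [qPoch, qPoch, qPoch, ← Finset.prod_mul_distrib]
  apply Finset.prod_congr rfl
  intro j _
  have h : (q ^ 4) ^ j = ((q ^ 2) ^ j) ^ 2 := by
    rw [← pow_mul, ← pow_mul, ← pow_mul]; ring_nf
  rw [h]; ring

lemma qPoch_ne_zero {a q : ℂ} (ha : ‖a‖ < 1) (hq : ‖q‖ ≤ 1) (n : ℕ) :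
    qPoch a q n ≠ 0 := by
  rw [qPoch]
  exact Finset.prod_ne_zero_iff.mpr (fun j _ => factor_ne_zero ha hq j)

/-- telescoping auxiliary sequence -/
noncomputable def gg (q : ℂ) : ℕ → ℂ
  | 0 => 2 / (1 + q)
  | n + 1 => qPoch q (q ^ 2) (n + 1) / ((1 + q) * qPoch (-q ^ 2) (q ^ 2) n)

theorem stmt_17 (q : ℂ) (hq : ‖q‖ < 1) :
    (qPochInf (q ^ 4) (q ^ 4) * ∑' n : ℕ, qPoch q q (2 * n) * q ^ (2 * n) / qPoch (q ^ 4) (q ^ 4) n =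
      qPochInf (q ^ 4) (q ^ 4) * ∑' n : ℕ, q ^ (2 * n) * qPoch q (q ^ 2) n / qPoch (-q ^ 2) (q ^ 2) n) ∧
    (qPochInf (q ^ 4) (q ^ 4) * ∑' n : ℕ, q ^ (2 * n) * qPoch q (q ^ 2) n / qPoch (-q ^ 2) (q ^ 2) n =
      2 * qPochInf (q ^ 4) (q ^ 4) / (1 + q) - qPochInf q q / (1 + q)) := by
  have habs0 : (0:ℝ) ≤ ‖q‖ := norm_nonneg _
  have hq2 : ‖q ^ 2‖ < 1 := by
    rw [norm_pow]; exact pow_lt_one₀ habs0 hq two_ne_zero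
  have hnq2 : ‖-q ^ 2‖ < 1 := by rwa [norm_neg]
  have hq4 : ‖q ^ 4‖ < 1 := by
    rw [norm_pow]; exact pow_lt_one₀ habs0 hq (by norm_num)
  have hone : (1 : ℂ) + q ≠ 0 := by
    intro h
    have hq1 : q = -1 := by linear_combination h
    rw [hq1] at hq; simp at hq
  -- per-term nonvanishing
  have hB : ∀ n, qPoch (q ^ 2) (q ^ 2) n ≠ 0 := fun n => qPoch_ne_zero hq2 hq2.le n
  have hC : ∀ n, qPoch (-q ^ 2) (q ^ 2) n ≠ 0 := fun n => qPoch_ne_zero hnq2 hq2.le n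
  -- Part 1: termwise equality
  have part1 : (∑' n : ℕ, qPoch q q (2 * n) * q ^ (2 * n) / qPoch (q ^ 4) (q ^ 4) n) =
      ∑' n : ℕ, q ^ (2 * n) * qPoch q (q ^ 2) n / qPoch (-q ^ 2) (q ^ 2) n := by
    apply tsum_congr
    intro n
    rw [split_even_odd, split_sq]
    rw [div_eq_div_iff (mul_ne_zero (hB n) (hC n)) (hC n)]
    ring
  -- telescoping
  have htel : ∀ n : ℕ, q ^ (2 * n) * qPoch q (q ^ 2) n / qPoch (-q ^ 2) (q ^ 2) n
      = gg q n - gg q (n + 1) := by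
    intro n
    match n with
    | 0 =>
      have g0 : gg q 0 = 2 / (1 + q) := rfl
      have g1 : gg q (0 + 1) = qPoch q (q ^ 2) 1 / ((1 + q) * qPoch (-q ^ 2) (q ^ 2) 0) := rfl
      have e1 : qPoch q (q ^ 2) 1 = 1 - q := by simp [qPoch]
      have e2 : qPoch (-q ^ 2) (q ^ 2) 0 = 1 := by simp [qPoch]
      have e3 : qPoch q (q ^ 2) 0 = 1 := by simp [qPoch]
      rw [g0, g1, e1, e2, e3]
      norm_num
      field_simp
      ring
    | Nat.succ m =>
      simp only [gg]
      have e1 : qPoch q (q ^ 2) (m + 1 + 1) = qPoch q (q ^ 2) (m + 1) * (1 - q * (q ^ 2) ^ (m + 1)) := by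
        rw [qPoch, qPoch, Finset.prod_range_succ]
      have e2 : qPoch (-q ^ 2) (q ^ 2) (m + 1) = qPoch (-q ^ 2) (q ^ 2) m * (1 + q ^ 2 * (q ^ 2) ^ m) := by
        rw [qPoch, qPoch, Finset.prod_range_succ]; ring
      have e3 : q ^ (2 * (m + 1)) = q ^ (2 * m) * q ^ 2 := by rw [← pow_add]; ring_nf
      have e4 : (q ^ 2 : ℂ) ^ (m + 1) = q ^ (2 * m) * q ^ 2 := by
        rw [← pow_mul, ← pow_add]; ring_nf
      have e5 : (q ^ 2 : ℂ) ^ m = q ^ (2 * m) := by rw [← pow_mul]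
      have hfac : (1 : ℂ) + q ^ 2 * (q ^ 2) ^ m ≠ 0 := by
        have := factor_ne_zero (a := -q ^ 2) (q := q ^ 2) hnq2 hq2.le m
        intro h; apply this; linear_combination h
      have hfac' : (1 : ℂ) + q ^ 2 * q ^ (2 * m) ≠ 0 := by rw [← e5]; exact hfac
      rw [e1, e2, e3, e4, e5]
      field_simp [hone, hC m, hfac']
      have hinv : (1 + q ^ 2 * q ^ (m * 2))⁻¹ * (1 + q ^ 2 * q ^ (m * 2)) = 1 :=
        inv_mul_cancel₀ (by rw [mul_comm m 2]; exact hfac')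
      linear_combination (qPoch q (q ^ 2) m.succ) * hinv
  set t : ℕ → ℂ := fun n => q ^ (2 * n) * qPoch q (q ^ 2) n / qPoch (-q ^ 2) (q ^ 2) n with ht_def
  -- limits
  have hPneg : qPochInf (-q ^ 2) (q ^ 2) ≠ 0 := qPochInf_ne_zero hnq2 hq2
  have hA : Tendsto (fun n => qPoch q (q ^ 2) n) atTop (nhds (qPochInf q (q ^ 2))) :=
    tendsto_qPoch hq hq2
  have hCt : Tendsto (fun n => qPoch (-q ^ 2) (q ^ 2) n) atTop (nhds (qPochInf (-q ^ 2) (q ^ 2))) :=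
    tendsto_qPoch hnq2 hq2
  -- summability of t
  have hratio : Tendsto (fun n => qPoch q (q ^ 2) n / qPoch (-q ^ 2) (q ^ 2) n) atTop
      (nhds (qPochInf q (q ^ 2) / qPochInf (-q ^ 2) (q ^ 2))) := hA.div hCt hPneg
  have hsumm : Summable t := by
    set L := qPochInf q (q ^ 2) / qPochInf (-q ^ 2) (q ^ 2) with hL
    have hgeo : Summable (fun n : ℕ => (‖L‖ + 1) * (‖q‖ ^ 2) ^ n) :=
      (summable_geometric_of_lt_one (by positivity)
        (by rw [← norm_pow]; exact hq2)).mul_left _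
    apply hgeo.of_norm_bounded_eventually_nat
    filter_upwards [hratio.norm.eventually_le_const (lt_add_one ‖L‖)] with n hn
    have : t n = q ^ (2 * n) * (qPoch q (q ^ 2) n / qPoch (-q ^ 2) (q ^ 2) n) := by
      rw [ht_def]; ring
    rw [this, norm_mul]
    have hpow : ‖q ^ (2 * n)‖ = (‖q‖ ^ 2) ^ n := by
      rw [norm_pow, ← pow_mul, mul_comm 2 n, pow_mul]
    rw [hpow]
    calc (‖q‖ ^ 2) ^ n * ‖qPoch q (q ^ 2) n / qPoch (-q ^ 2) (q ^ 2) n‖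
        ≤ (‖q‖ ^ 2) ^ n * (‖L‖ + 1) := by
          apply mul_le_mul_of_nonneg_left hn (by positivity)
      _ = (‖L‖ + 1) * (‖q‖ ^ 2) ^ n := by ring
  -- limit of gg
  have hgg : Tendsto (gg q) atTop
      (nhds (qPochInf q (q ^ 2) / ((1 + q) * qPochInf (-q ^ 2) (q ^ 2)))) := by
    rw [← tendsto_add_atTop_iff_nat 1]
    have hden : Tendsto (fun n => (1 + q) * qPoch (-q ^ 2) (q ^ 2) n) atTop
        (nhds ((1 + q) * qPochInf (-q ^ 2) (q ^ 2))) := tendsto_const_nhds.mul hCt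
    have hnum : Tendsto (fun n => qPoch q (q ^ 2) (n + 1)) atTop (nhds (qPochInf q (q ^ 2))) :=
      hA.comp (tendsto_add_atTop_nat 1)
    have := hnum.div hden (mul_ne_zero hone hPneg)
    exact this.congr (fun n => by simp [gg])
  -- value of the sum
  have hhs : HasSum t (gg q 0 - qPochInf q (q ^ 2) / ((1 + q) * qPochInf (-q ^ 2) (q ^ 2))) := by
    rw [hsumm.hasSum_iff_tendsto_nat]
    have hps : ∀ n : ℕ, ∑ i ∈ Finset.range n, t i = gg q 0 - gg q n := by
      intro n
      rw [show (∑ i ∈ Finset.range n, t i) = ∑ i ∈ Finset.range n, (gg q i - gg q (i + 1)) from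
        Finset.sum_congr rfl (fun i _ => htel i)]
      exact Finset.sum_range_sub' (gg q) n
    simp only [hps]
    exact tendsto_const_nhds.sub hgg
  have htsum : (∑' n : ℕ, q ^ (2 * n) * qPoch q (q ^ 2) n / qPoch (-q ^ 2) (q ^ 2) n)
      = 2 / (1 + q) - qPochInf q (q ^ 2) / ((1 + q) * qPochInf (-q ^ 2) (q ^ 2)) := by
    have := hhs.tsum_eq
    simpa [gg] using this
  -- infinite product identities
  have hI2 : qPochInf (q ^ 4) (q ^ 4) = qPochInf (q ^ 2) (q ^ 2) * qPochInf (-q ^ 2) (q ^ 2) := by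
    have h1 : Tendsto (fun n => qPoch (q ^ 4) (q ^ 4) n) atTop (nhds (qPochInf (q ^ 4) (q ^ 4))) :=
      tendsto_qPoch hq4 hq4
    have h2 : Tendsto (fun n => qPoch (q ^ 4) (q ^ 4) n) atTop
        (nhds (qPochInf (q ^ 2) (q ^ 2) * qPochInf (-q ^ 2) (q ^ 2))) := by
      have := (tendsto_qPoch hq2 hq2).mul hCt
      exact this.congr (fun n => (split_sq q n).symm)
    exact tendsto_nhds_unique h1 h2
  have hI1 : qPochInf q q = qPochInf q (q ^ 2) * qPochInf (q ^ 2) (q ^ 2) := by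
    have hmul : Tendsto (fun n : ℕ => 2 * n) atTop atTop := by
      have hsm : StrictMono (fun n : ℕ => 2 * n) := fun a b h => by dsimp only; omega
      exact hsm.tendsto_atTop
    have h1 : Tendsto (fun n : ℕ => qPoch q q (2 * n)) atTop (nhds (qPochInf q q)) :=
      (tendsto_qPoch hq hq).comp hmul
    have h2 : Tendsto (fun n : ℕ => qPoch q q (2 * n)) atTop
        (nhds (qPochInf q (q ^ 2) * qPochInf (q ^ 2) (q ^ 2))) := by
      have := hA.mul (tendsto_qPoch hq2 hq2)
      exact this.congr (fun n => (split_even_odd q n).symm)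
    exact tendsto_nhds_unique h1 h2
  constructor
  · rw [part1]
  · rw [htsum, hI1, hI2]
    field_simp
end
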